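/- Let α > 0 and a¹, a², a³ be real numbers, and set vᴵ = √(α² + (aᴵ)²) for I = 1,2,3. Suppose 1/v¹ + 1/v² = 1/v³ and a¹/v¹ + a²/v² = a³/v³, and a² > a¹. Then 1/v¹ = (1/v³)(1/2 + √3·a³/(2α)) and 1/v² = (1/v³)(1/2 − √3·a³/(2α)). -/

import Mathlib

theorem lemma12_first_half (α a1 a2 a3 v1 v2 v3 : ℝ) (hα : 0 < α)
    (hv1 : v1 = Real.sqrt (α ^ 2 + a1 ^ 2))
    (hv2 : v2 = Real.sqrt (α ^ 2 + a2 ^ 2))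
    (hv3 : v3 = Real.sqrt (α ^ 2 + a3 ^ 2))
    (hrel1 : 1 / v1 + 1 / v2 = 1 / v3)
    (hrel2 : a1 / v1 + a2 / v2 = a3 / v3)
    (hord : a1 < a2) :
    1 / v1 = (1 / v3) * (1 / 2 + Real.sqrt 3 * a3 / (2 * α)) ∧
    1 / v2 = (1 / v3) * (1 / 2 - Real.sqrt 3 * a3 / (2 * α)) := by
  have p1 : 0 < α ^ 2 + a1 ^ 2 := by positivity
  have p2 : 0 < α ^ 2 + a2 ^ 2 := by positivity
  have p3 : 0 < α ^ 2 + a3 ^ 2 := by positivity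
  have hv1p : 0 < v1 := hv1 ▸ Real.sqrt_pos.mpr p1
  have hv2p : 0 < v2 := hv2 ▸ Real.sqrt_pos.mpr p2
  have hv3p : 0 < v3 := hv3 ▸ Real.sqrt_pos.mpr p3
  have hs1 : v1 ^ 2 = α ^ 2 + a1 ^ 2 := by rw [hv1, Real.sq_sqrt p1.le]
  have hs2 : v2 ^ 2 = α ^ 2 + a2 ^ 2 := by rw [hv2, Real.sq_sqrt p2.le]
  have hs3 : v3 ^ 2 = α ^ 2 + a3 ^ 2 := by rw [hv3, Real.sq_sqrt p3.le]
  set x1 := α / v1 with hx1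
  set x2 := α / v2 with hx2
  set x3 := α / v3 with hx3
  set y1 := a1 / v1 with hy1
  set y2 := a2 / v2 with hy2
  set y3 := a3 / v3 with hy3
  have u1 : x1 ^ 2 + y1 ^ 2 = 1 := by
    rw [hx1, hy1]; field_simp; linarith [hs1]
  have u2 : x2 ^ 2 + y2 ^ 2 = 1 := by
    rw [hx2, hy2]; field_simp; linarith [hs2]
  have u3 : x3 ^ 2 + y3 ^ 2 = 1 := by
    rw [hx3, hy3]; field_simp; linarith [hs3]
  have h1 : x1 + x2 = x3 := by
    rw [hx1, hx2, hx3, div_eq_mul_one_div, div_eq_mul_one_div α v2,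
      div_eq_mul_one_div α v3, ← mul_add, hrel1]
  have h2 : y1 + y2 = y3 := hrel2
  have hpos : 0 < x1 * y2 - x2 * y1 := by
    rw [hx1, hx2, hy1, hy2]
    have hrw : α / v1 * (a2 / v2) - α / v2 * (a1 / v1)
        = α * (a2 - a1) / (v1 * v2) := by field_simp
    rw [hrw]
    exact div_pos (mul_pos hα (sub_pos.mpr hord)) (by positivity)
  clear_value x1 x2 x3 y1 y2 y3
  -- orthogonality of P1 - P2 with P3
  have hA : x3 * (x1 - x2) + y3 * (y1 - y2) = 0 := by
    linear_combination u1 - u2 - (x1 - x2) * h1 - (y1 - y2) * h2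
  -- |P1 - P2|^2 = 3
  have hB : (x1 - x2) ^ 2 + (y1 - y2) ^ 2 = 3 := by
    linear_combination 2 * u1 + 2 * u2 - u3 - (x1 + x2 + x3) * h1 - (y1 + y2 + y3) * h2
  -- cross product
  have hC : x3 * (y1 - y2) - y3 * (x1 - x2) = -2 * (x1 * y2 - x2 * y1) := by
    rw [← h1, ← h2]; ring
  have hsq : (x3 * (y1 - y2) - y3 * (x1 - x2)) ^ 2 = 3 := by
    linear_combination (-(x3 * (x1 - x2) + y3 * (y1 - y2))) * hA
      + ((x1 - x2) ^ 2 + (y1 - y2) ^ 2) * u3 + hB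
  have hsneg : x3 * (y1 - y2) - y3 * (x1 - x2) < 0 := by rw [hC]; linarith
  have h3 : (Real.sqrt 3) ^ 2 = 3 := Real.sq_sqrt (by norm_num)
  have hsval : x3 * (y1 - y2) - y3 * (x1 - x2) = -Real.sqrt 3 := by
    have hfac : (x3 * (y1 - y2) - y3 * (x1 - x2) - Real.sqrt 3)
        * (x3 * (y1 - y2) - y3 * (x1 - x2) + Real.sqrt 3) = 0 := by
      linear_combination hsq - h3
    rcases mul_eq_zero.mp hfac with h | h
    · exfalso; linarith [Real.sqrt_nonneg 3]
    · linarith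
  have hd1 : x1 - x2 = Real.sqrt 3 * y3 := by
    have hid : (x1 - x2) = x3 * (x3 * (x1 - x2) + y3 * (y1 - y2))
        - y3 * (x3 * (y1 - y2) - y3 * (x1 - x2)) := by
      linear_combination (-(x1 - x2)) * u3
    rw [hA, hsval] at hid; linarith [hid]
  have key1 : x1 = x3 / 2 + Real.sqrt 3 * y3 / 2 := by linarith [h1, hd1]
  have key2 : x2 = x3 / 2 - Real.sqrt 3 * y3 / 2 := by linarith [h1, hd1]
  rw [hx1, hx3, hy3] at key1
  rw [hx2, hx3, hy3] at key2
  constructor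
  · rw [show (1 : ℝ) / v1 = (α / v1) / α by field_simp, key1]
    field_simp
  · rw [show (1 : ℝ) / v2 = (α / v2) / α by field_simp, key2]
    field_simp
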